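/- Let 𝔖 = O_{K₀}[[u]], let O_E be the p-adic completion of 𝔖[1/u], and let 𝔖_𝕂 = O_{𝕂₀}[[u]] where O_{K₀} ⊂ O_{𝕂₀} is an extension of complete DVRs with p as uniformizer (𝕂₀ obtained by perfecting the residue field). Then inside O_{E_𝕂} (the p-adic completion of 𝔖_𝕂[1/u]) one has 𝔖 = O_E ∩ 𝔖_𝕂. -/

import Mathlib

/-- Let `𝒪_{K₀} → 𝒪_{𝕂₀}` (here `f₀ : O → O'`) be an injective extension of
complete DVRs with common uniformizer `p`, with `O` `p`-adically closed in `O'` (the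
perfected-residue-field extension).  Set `𝔖 = O[[u]]`, `𝔖_𝕂 = O'[[u]]`, and let `O_E`
(resp. `O_{E_𝕂}`) be the `p`-adic completion of `𝔖[1/u]` (resp. `𝔖_𝕂[1/u]`).  Then, inside
`O_{E_𝕂}`, one has `𝔖 = O_E ∩ 𝔖_𝕂`.  Since the intersection takes place inside
`𝔖_𝕂 = O'[[u]]`, this says precisely: a power series `f ∈ O'[[u]]` lies in `O_E` — i.e. for
every `n` there are `k ∈ ℕ` and `g ∈ 𝔖` with `u^k·f ≡ g mod p^n` (approximation by
`u^{-k}·𝔖 ⊆ 𝔖[1/u]`) — if and only if `f` comes from `𝔖 = O[[u]]`. -/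
theorem stmt8 {O O' : Type*} [CommRing O] [CommRing O']
    (f₀ : O →+* O') (hf₀ : Function.Injective f₀)
    (p : ℕ) (hp : p.Prime)
    -- `O` is `p`-adically closed in `O'`:
    (hclosed : ∀ a : O', (∀ n : ℕ, ∃ b : O, ∃ c : O', a - f₀ b = (p : O') ^ n * c) →
      ∃ b : O, f₀ b = a) :
    ∀ f : PowerSeries O',
      (∀ n : ℕ, ∃ (k : ℕ) (g : PowerSeries O),
          ∀ i : ℕ, ∃ c : O',
            PowerSeries.coeff i (PowerSeries.X ^ k * f) - f₀ (PowerSeries.coeff i g)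
              = (p : O') ^ n * c)
        ↔ ∃ g : PowerSeries O, PowerSeries.map f₀ g = f := by
  intro f
  constructor
  · intro h
    -- each coefficient of `f` lies in the image of `f₀`
    have hcoeff : ∀ i : ℕ, ∃ b : O, f₀ b = PowerSeries.coeff i f := by
      intro i
      apply hclosed
      intro n
      obtain ⟨k, g, hg⟩ := h n
      obtain ⟨c, hc⟩ := hg (i + k)
      rw [PowerSeries.coeff_X_pow_mul] at hc
      exact ⟨PowerSeries.coeff (i + k) g, c, hc⟩
    choose b hb using hcoeff
    refine ⟨PowerSeries.mk b, ?_⟩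
    ext i
    simp [hb]
  · rintro ⟨g, rfl⟩
    intro n
    refine ⟨0, g, fun i => ⟨0, ?_⟩⟩
    simp
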